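/- In the exterior-power setting, the horizontal Plücker relation holds for two rows of odd vectors: if s_1,...,s_p and t_1,...,t_q (p ≥ q ≥ 1) are indices greater than m (so the corresponding basis vectors of ℂ^{m|n} are odd), then the antisymmetrized-in-columns tensor e_T built from the two-row tableau with rows (s_1,...,s_p) and (t_1,...,t_q) satisfies e_T = Σ_{j=1}^p e_{T·(s_j ↔ t_1)}, where T·(s_j ↔ t_1) is the tableau obtained by exchanging s_j with t_1. -/

import Mathlib

open BigOperators

/-- The coordinate, at a pair of basis indices `x`, of the wedge e_a ∧ e_b of two odd
basis vectors: x ↦ (1/2)(δ_{x,(a,b)} + δ_{x,(b,a)}). -/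
noncomputable def wedgeCoord (M : ℕ) (a b : Fin M) (x : Fin M × Fin M) : ℂ :=
  (1/2) * ((if x.1 = a ∧ x.2 = b then 1 else 0) + (if x.1 = b ∧ x.2 = a then 1 else 0))

/-- The antisymmetrized-in-columns tensor e_T associated to the two-row tableau with rows
(s_1,…,s_p) and (t_1,…,t_q), written in coordinates on V^{⊗(p+q)} (the first q columns are
the pairs, the last p-q boxes are singletons):
e_T = Σ_{(σ,τ) ∈ S_p × S_q} ε(σ)ε(τ) (e_{s_{σ(1)}} ∧ e_{t_{τ(1)}}) ⊗ ⋯ ⊗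
(e_{s_{σ(q)}} ∧ e_{t_{τ(q)}}) ⊗ e_{s_{σ(q+1)}} ⊗ ⋯ ⊗ e_{s_{σ(p)}}. -/
noncomputable def eTrow (M p q : ℕ) (hpq : q ≤ p) (s : Fin p → Fin M) (t : Fin q → Fin M) :
    ((Fin q → Fin M × Fin M) × (Fin (p - q) → Fin M)) → ℂ :=
  fun c =>
    ∑ σ : Equiv.Perm (Fin p), ∑ τ : Equiv.Perm (Fin q),
      ((Equiv.Perm.sign σ : ℤ) : ℂ) * ((Equiv.Perm.sign τ : ℤ) : ℂ) *
        (∏ k : Fin q, wedgeCoord M (s (σ (Fin.castLE hpq k))) (t (τ k)) (c.1 k)) *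
        (∏ k : Fin (p - q),
          (if c.2 k = s (σ ⟨q + k.1, by have hk := k.isLt; omega⟩) then 1 else 0))

lemma wedgeCoord_comm (M : ℕ) (a b : Fin M) (x : Fin M × Fin M) :
    wedgeCoord M a b x = wedgeCoord M b a x := by
  unfold wedgeCoord; ring

noncomputable def colTerm (M p q : ℕ) (hpq : q ≤ p) (s : Fin p → Fin M) (t : Fin q → Fin M)
    (σ : Equiv.Perm (Fin p)) (τ : Equiv.Perm (Fin q))
    (c : (Fin q → Fin M × Fin M) × (Fin (p - q) → Fin M)) : ℂ :=
  (∏ k : Fin q, wedgeCoord M (s (σ (Fin.castLE hpq k))) (t (τ k)) (c.1 k)) *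
  (∏ k : Fin (p - q),
    (if c.2 k = s (σ ⟨q + k.1, by have hk := k.isLt; omega⟩) then 1 else 0))

lemma eTrow_eq (M p q : ℕ) (hpq : q ≤ p) (s : Fin p → Fin M) (t : Fin q → Fin M) (c) :
    eTrow M p q hpq s t c =
      ∑ σ : Equiv.Perm (Fin p), ∑ τ : Equiv.Perm (Fin q),
        ((Equiv.Perm.sign σ : ℤ) : ℂ) * ((Equiv.Perm.sign τ : ℤ) : ℂ) *
          colTerm M p q hpq s t σ τ c := by
  simp [eTrow, colTerm, mul_assoc]

lemma diag_eq (M p q : ℕ) (hq : 0 < q) (hpq : q ≤ p) (s : Fin p → Fin M) (t : Fin q → Fin M)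
    (σ : Equiv.Perm (Fin p)) (τ : Equiv.Perm (Fin q)) (c) :
    colTerm M p q hpq s t σ τ c =
      colTerm M p q hpq
        (Function.update s (σ (Fin.castLE hpq (τ⁻¹ ⟨0, hq⟩))) (t ⟨0, hq⟩))
        (Function.update t ⟨0, hq⟩ (s (σ (Fin.castLE hpq (τ⁻¹ ⟨0, hq⟩))))) σ τ c := by
  set z : Fin q := ⟨0, hq⟩
  set j : Fin p := σ (Fin.castLE hpq (τ⁻¹ z)) with hjdef
  unfold colTerm
  congr 1
  · apply Finset.prod_congr rfl
    intro k _
    by_cases hk : k = τ⁻¹ z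
    · subst hk
      rw [show τ (τ⁻¹ z) = z from τ.apply_symm_apply z]
      rw [Function.update_self, ← hjdef, Function.update_self]
      exact wedgeCoord_comm _ _ _ _
    · have h1 : τ k ≠ z := fun h => hk (by rw [← h, show τ⁻¹ (τ k) = k from τ.symm_apply_apply k])
      have h2 : σ (Fin.castLE hpq k) ≠ j := by
        rw [hjdef]
        intro h
        exact hk (Fin.castLE_injective hpq (σ.injective h))
      rw [Function.update_of_ne h2, Function.update_of_ne h1]
  · apply Finset.prod_congr rfl
    intro k _
    have h2 : σ ⟨q + k.1, by have hk := k.isLt; omega⟩ ≠ j := by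
      rw [hjdef]
      intro h
      have := σ.injective h
      have : q + k.1 = ((τ⁻¹ z : Fin q) : ℕ) := congrArg Fin.val this
      have hlt := (τ⁻¹ z).isLt
      omega
    rw [Function.update_of_ne h2]

lemma offdiag_pair (M p q : ℕ) (hq : 0 < q) (hpq : q ≤ p) (s : Fin p → Fin M)
    (t : Fin q → Fin M) (σ : Equiv.Perm (Fin p)) (τ : Equiv.Perm (Fin q)) (j : Fin p)
    (hj : j ≠ σ (Fin.castLE hpq (τ⁻¹ ⟨0, hq⟩))) (c) :
    colTerm M p q hpq (Function.update s j (t ⟨0, hq⟩)) (Function.update t ⟨0, hq⟩ (s j))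
      σ τ c =
    colTerm M p q hpq
      (Function.update s (σ (Fin.castLE hpq (τ⁻¹ ⟨0, hq⟩))) (t ⟨0, hq⟩))
      (Function.update t ⟨0, hq⟩ (s (σ (Fin.castLE hpq (τ⁻¹ ⟨0, hq⟩)))))
      (σ * Equiv.swap (σ⁻¹ j) (Fin.castLE hpq (τ⁻¹ ⟨0, hq⟩))) τ c := by
  set z : Fin q := ⟨0, hq⟩
  set k1 : Fin p := Fin.castLE hpq (τ⁻¹ z) with hk1def
  set j2 : Fin p := σ k1 with hj2def
  set a : Fin p := σ⁻¹ j with hadef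
  have hja : σ a = j := σ.apply_symm_apply j
  have hak1 : a ≠ k1 := by
    intro h; apply hj; rw [← hja, h]
  have hjj2 : j ≠ j2 := hj
  -- how the new permutation acts
  have hσ' : ∀ x : Fin p, (σ * Equiv.swap a k1) x = σ (Equiv.swap a k1 x) := fun x => rfl
  unfold colTerm
  congr 1
  · apply Finset.prod_congr rfl
    intro k _
    by_cases hk : k = τ⁻¹ z
    · subst hk
      rw [show τ (τ⁻¹ z) = z from τ.apply_symm_apply z]
      have e1 : Fin.castLE hpq (τ⁻¹ z) = k1 := rfl
      rw [e1, hσ', Equiv.swap_apply_right, hja]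
      rw [Function.update_of_ne (Ne.symm hjj2), Function.update_self,
        Function.update_of_ne hjj2, Function.update_self]
      exact wedgeCoord_comm _ _ _ _
    · have h1 : τ k ≠ z := fun h => hk (by rw [← h, show τ⁻¹ (τ k) = k from τ.symm_apply_apply k])
      have hkk1 : Fin.castLE hpq k ≠ k1 := by
        rw [hk1def]; exact fun h => hk (Fin.castLE_injective hpq h)
      rw [Function.update_of_ne h1, Function.update_of_ne h1]
      by_cases hka : Fin.castLE hpq k = a
      · rw [hka] at hkk1 ⊢
        rw [hσ', Equiv.swap_apply_left, hja, ← hj2def, Function.update_self,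
          Function.update_self]
      · rw [hσ', Equiv.swap_apply_of_ne_of_ne hka hkk1]
        have hne1 : σ (Fin.castLE hpq k) ≠ j := by
          rw [← hja]; exact fun h => hka (σ.injective h)
        have hne2 : σ (Fin.castLE hpq k) ≠ j2 := by
          rw [hj2def]; exact fun h => hkk1 (σ.injective h)
        rw [Function.update_of_ne hne1, Function.update_of_ne hne2]
  · apply Finset.prod_congr rfl
    intro k _
    set e : Fin p := (⟨q + k.1, by have hk := k.isLt; omega⟩ : Fin p) with hedef
    have hek1 : e ≠ k1 := by
      intro h
      have : q + k.1 = ((τ⁻¹ z : Fin q) : ℕ) := congrArg Fin.val h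
      have hlt := (τ⁻¹ z).isLt
      omega
    by_cases hea : e = a
    · rw [hea] at hek1 ⊢
      rw [hσ', Equiv.swap_apply_left, hja, ← hj2def, Function.update_self,
        Function.update_self]
    · rw [hσ', Equiv.swap_apply_of_ne_of_ne hea hek1]
      have hne1 : σ e ≠ j := by rw [← hja]; exact fun h => hea (σ.injective h)
      have hne2 : σ e ≠ j2 := by rw [hj2def]; exact fun h => hek1 (σ.injective h)
      rw [Function.update_of_ne hne1, Function.update_of_ne hne2]


lemma offdiag_cancel (M p q : ℕ) (hq : 0 < q) (hpq : q ≤ p) (s : Fin p → Fin M)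
    (t : Fin q → Fin M) (τ : Equiv.Perm (Fin q)) (c) :
    ∑ x ∈ Finset.univ.filter
        (fun x : Fin p × Equiv.Perm (Fin p) =>
          x.1 ≠ x.2 (Fin.castLE hpq (τ⁻¹ ⟨0, hq⟩))),
      ((Equiv.Perm.sign x.2 : ℤ) : ℂ) *
        colTerm M p q hpq (Function.update s x.1 (t ⟨0, hq⟩))
          (Function.update t ⟨0, hq⟩ (s x.1)) x.2 τ c = 0 := by
  classical
  apply Finset.sum_involution
    (g := fun (x : Fin p × Equiv.Perm (Fin p)) _ =>
      ((x.2 (Fin.castLE hpq (τ⁻¹ ⟨0, hq⟩)) : Fin p),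
        x.2 * Equiv.swap (x.2⁻¹ x.1) (Fin.castLE hpq (τ⁻¹ ⟨0, hq⟩))))
  · -- f a + f (g a) = 0
    intro x hx
    obtain ⟨j, σ⟩ := x
    simp only [Finset.mem_filter, Finset.mem_univ, true_and] at hx
    have hak1 : σ⁻¹ j ≠ Fin.castLE hpq (τ⁻¹ ⟨0, hq⟩) := by
      intro h
      apply hx
      rw [← show σ (σ⁻¹ j) = j from σ.apply_symm_apply j, h]
    have hsign : ((Equiv.Perm.sign (σ * Equiv.swap (σ⁻¹ j) (Fin.castLE hpq (τ⁻¹ ⟨0, hq⟩))) : ℤ) : ℂ)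
        = -((Equiv.Perm.sign σ : ℤ) : ℂ) := by
      rw [Equiv.Perm.sign_mul, Equiv.Perm.sign_swap hak1]
      push_cast
      ring
    have hterm := offdiag_pair M p q hq hpq s t σ τ j hx c
    dsimp only
    rw [hsign, ← hterm]
    ring
  · -- g a ≠ a
    intro x hx _
    obtain ⟨j, σ⟩ := x
    simp only [Finset.mem_filter, Finset.mem_univ, true_and] at hx
    intro h
    exact hx (congrArg Prod.fst h).symm
  · -- g a ∈ s
    intro x hx
    obtain ⟨j, σ⟩ := x
    simp only [Finset.mem_filter, Finset.mem_univ, true_and] at hx ⊢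
    have : (σ * Equiv.swap (σ⁻¹ j) (Fin.castLE hpq (τ⁻¹ ⟨0, hq⟩)))
        (Fin.castLE hpq (τ⁻¹ ⟨0, hq⟩)) = j := by
      show σ (Equiv.swap (σ⁻¹ j) (Fin.castLE hpq (τ⁻¹ ⟨0, hq⟩))
        (Fin.castLE hpq (τ⁻¹ ⟨0, hq⟩))) = j
      rw [Equiv.swap_apply_right, show σ (σ⁻¹ j) = j from σ.apply_symm_apply j]
    rw [this]
    exact fun h => hx h.symm
  · -- involution
    intro x hx
    obtain ⟨j, σ⟩ := x
    simp only [Finset.mem_filter, Finset.mem_univ, true_and] at hx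
    set k1 : Fin p := Fin.castLE hpq (τ⁻¹ ⟨0, hq⟩) with hk1def
    set σ' := σ * Equiv.swap (σ⁻¹ j) k1 with hσ'def
    have h1 : σ' k1 = j := by
      show σ (Equiv.swap (σ⁻¹ j) k1 k1) = j
      rw [Equiv.swap_apply_right, show σ (σ⁻¹ j) = j from σ.apply_symm_apply j]
    have h2 : σ'⁻¹ (σ k1) = σ⁻¹ j := by
      have h0 : σ' (σ⁻¹ j) = σ k1 := by
        show σ (Equiv.swap (σ⁻¹ j) k1 (σ⁻¹ j)) = σ k1
        rw [Equiv.swap_apply_left]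
      rw [← h0, show σ'⁻¹ (σ' (σ⁻¹ j)) = σ⁻¹ j from σ'.symm_apply_apply _]
    have h3 : σ' * Equiv.swap (σ'⁻¹ (σ k1)) k1 = σ := by
      rw [h2, hσ'def, mul_assoc, Equiv.swap_mul_self, mul_one]
    dsimp only
    rw [Prod.mk.injEq]
    exact ⟨h1, h3⟩

/-- The horizontal Plücker relation for two rows of odd vectors: if all the indices
s_1,…,s_p and t_1,…,t_q (p ≥ q ≥ 1) correspond to odd basis vectors of ℂ^{m|n} (indices
greater than m), then e_T = Σ_{j=1}^p e_{T·(s_j ↔ t_1)}, where T·(s_j ↔ t_1) is the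
tableau obtained by exchanging s_j with t_1. -/
theorem horizontal_plucker (m M p q : ℕ) (hq : 0 < q) (hpq : q ≤ p)
    (s : Fin p → Fin M) (t : Fin q → Fin M)
    (hs : ∀ k, m ≤ (s k).val) (ht : ∀ k, m ≤ (t k).val) :
    eTrow M p q hpq s t =
      ∑ j : Fin p,
        eTrow M p q hpq (Function.update s j (t ⟨0, hq⟩))
          (Function.update t ⟨0, hq⟩ (s j)) := by
  classical
  funext c
  rw [Finset.sum_apply]
  have main : ∀ τ : Equiv.Perm (Fin q),
      ∑ x : Fin p × Equiv.Perm (Fin p),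
        ((Equiv.Perm.sign x.2 : ℤ) : ℂ) *
          colTerm M p q hpq (Function.update s x.1 (t ⟨0, hq⟩))
            (Function.update t ⟨0, hq⟩ (s x.1)) x.2 τ c =
      ∑ σ : Equiv.Perm (Fin p),
        ((Equiv.Perm.sign σ : ℤ) : ℂ) * colTerm M p q hpq s t σ τ c := by
    intro τ
    rw [← Finset.sum_filter_add_sum_filter_not Finset.univ
      (fun x : Fin p × Equiv.Perm (Fin p) =>
        x.1 ≠ x.2 (Fin.castLE hpq (τ⁻¹ ⟨0, hq⟩)))]
    rw [offdiag_cancel M p q hq hpq s t τ c, zero_add]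
    apply Finset.sum_bij (i := fun (x : Fin p × Equiv.Perm (Fin p)) _ => x.2)
    · intros; exact Finset.mem_univ _
    · intro x hx y hy h
      simp only [Finset.mem_filter, Finset.mem_univ, true_and, not_not] at hx hy
      have h1 : x.1 = y.1 := by rw [hx, hy, h]
      exact Prod.ext h1 h
    · intro σ _
      refine ⟨(σ (Fin.castLE hpq (τ⁻¹ ⟨0, hq⟩)), σ), ?_, rfl⟩
      simp
    · intro x hx
      simp only [Finset.mem_filter, Finset.mem_univ, true_and, not_not] at hx
      rw [hx, ← diag_eq M p q hq hpq s t x.2 τ c]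
  calc
    eTrow M p q hpq s t c
        = ∑ τ : Equiv.Perm (Fin q), ((Equiv.Perm.sign τ : ℤ) : ℂ) *
            ∑ σ : Equiv.Perm (Fin p),
              ((Equiv.Perm.sign σ : ℤ) : ℂ) * colTerm M p q hpq s t σ τ c := by
          rw [eTrow_eq, Finset.sum_comm]
          refine Finset.sum_congr rfl fun τ _ => ?_
          rw [Finset.mul_sum]
          exact Finset.sum_congr rfl fun σ _ => by ring
    _ = ∑ τ : Equiv.Perm (Fin q), ((Equiv.Perm.sign τ : ℤ) : ℂ) *
            ∑ x : Fin p × Equiv.Perm (Fin p),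
              ((Equiv.Perm.sign x.2 : ℤ) : ℂ) *
                colTerm M p q hpq (Function.update s x.1 (t ⟨0, hq⟩))
                  (Function.update t ⟨0, hq⟩ (s x.1)) x.2 τ c := by
          refine Finset.sum_congr rfl fun τ _ => ?_
          rw [main τ]
    _ = ∑ τ : Equiv.Perm (Fin q), ∑ j : Fin p, ∑ σ : Equiv.Perm (Fin p),
            ((Equiv.Perm.sign σ : ℤ) : ℂ) * ((Equiv.Perm.sign τ : ℤ) : ℂ) *
              colTerm M p q hpq (Function.update s j (t ⟨0, hq⟩))
                (Function.update t ⟨0, hq⟩ (s j)) σ τ c := by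
          refine Finset.sum_congr rfl fun τ _ => ?_
          rw [Finset.mul_sum, Fintype.sum_prod_type]
          refine Finset.sum_congr rfl fun j _ => ?_
          exact Finset.sum_congr rfl fun σ _ => by ring
    _ = ∑ j : Fin p,
          eTrow M p q hpq (Function.update s j (t ⟨0, hq⟩))
            (Function.update t ⟨0, hq⟩ (s j)) c := by
          rw [Finset.sum_comm]
          refine Finset.sum_congr rfl fun j _ => ?_
          rw [eTrow_eq]
          exact Finset.sum_comm
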